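/- With K(σ₁), K(σ₂) as the t=1 LKB matrices and P₁ = [[1,0,0],[0,0,1],[0,1,0]], P₂ = [[0,1,0],[1,0,0],[0,0,1]], the welded relations hold: P₁² = P₂² = I, P₁P₂P₁ = P₂P₁P₂, K(σ₁)P₂P₁ = P₂P₁K(σ₂), and the over-forbidden relation K(σ₁)K(σ₂)P₁ = P₂K(σ₁)K(σ₂). -/

import Mathlib

open Matrix

set_option maxHeartbeats 1000000 in
theorem lkb_t_one_welded_relations (q : ℂ) (hq : q ≠ 0) :
    let A : Matrix (Fin 3) (Fin 3) ℂ :=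
      !![q ^ 2, q * (q - 1), 0; 0, 1 - q, 1; 0, q, 0]
    let B : Matrix (Fin 3) (Fin 3) ℂ :=
      !![1 - q, 1, 0; q, 0, 0; q * (q - 1), 0, q ^ 2]
    let P₁ : Matrix (Fin 3) (Fin 3) ℂ := !![1, 0, 0; 0, 0, 1; 0, 1, 0]
    let P₂ : Matrix (Fin 3) (Fin 3) ℂ := !![0, 1, 0; 1, 0, 0; 0, 0, 1]
    P₁ * P₁ = 1 ∧ P₂ * P₂ = 1 ∧ P₁ * P₂ * P₁ = P₂ * P₁ * P₂ ∧
      A * P₂ * P₁ = P₂ * P₁ * B ∧ A * B * P₁ = P₂ * (A * B) := by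
  intro A B P₁ P₂
  refine ⟨?_, ?_, ?_, ?_, ?_⟩ <;>
  · show _ = _
    simp only [A, B, P₁, P₂, Matrix.mul_fin_three, Matrix.one_fin_three]
    norm_num
    all_goals (ring_nf <;> simp)
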